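/- Let G be a finite simple graph, M a module of G, and W a shortest path from s to t whose vertex set intersects M in exactly one vertex u, where u ∉ {s, t}. Then for every vertex v ∈ M, the sequence obtained from W by replacing u with v is again a shortest path from s to t in G. -/

import Mathlib

open SimpleGraph

/-- `M` is a module of `G`: every vertex outside `M` is adjacent either to all vertices
of `M` or to none of them. -/
def IsModule {V : Type*} (G : SimpleGraph V) (M : Set V) : Prop :=
  ∀ x ∈ M, ∀ y ∈ M, ∀ z ∉ M, (G.Adj x z ↔ G.Adj y z)

/-- If a shortest path `W` from `s` to `t` meets a module `M` in exactly
one vertex `u ∉ {s, t}`, then for every `v ∈ M` the sequence obtained from `W` by replacing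
`u` with `v` is again a shortest path from `s` to `t`. -/
theorem stmt_10 {V : Type*} [Fintype V] [DecidableEq V] (G : SimpleGraph V) (M : Set V)
    (hM : IsModule G M) (s t : V) (W : G.Walk s t) (hpath : W.IsPath)
    (hlen : W.length = G.dist s t) (u : V) (huM : u ∈ M) (huW : u ∈ W.support)
    (huniq : ∀ x ∈ W.support, x ∈ M → x = u) (hus : u ≠ s) (hut : u ≠ t) :
    ∀ v ∈ M, ∃ W' : G.Walk s t, W'.IsPath ∧ W'.length = G.dist s t ∧
      W'.support = W.support.map fun x => if x = u then v else x := by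
  intro v hvM
  by_cases hvu : v = u
  · subst hvu
    refine ⟨W, hpath, hlen, ?_⟩
    have : (fun x => if x = v then v else x) = id := by
      funext x; split <;> simp_all
    simp [this]
  -- v ≠ u
  have hvW : v ∉ W.support := fun h => hvu (huniq v h hvM)
  -- decompose W at u
  have hW := (W.take_spec huW).symm
  set p := W.takeUntil u huW with hp
  set q := W.dropUntil u huW with hq
  -- q = cons hub q'
  have hqnil : ¬ q.Nil := by
    intro h
    exact hut (SimpleGraph.Walk.Nil.eq h)
  obtain ⟨b, hub, q', hq'⟩ := SimpleGraph.Walk.not_nil_iff.mp hqnil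
  -- p.reverse = cons hua pr
  have hpnil : ¬ p.reverse.Nil := by
    intro h
    exact hus (SimpleGraph.Walk.Nil.eq h)
  obtain ⟨a, hua, pr, hpr⟩ := SimpleGraph.Walk.not_nil_iff.mp hpnil
  have hpeq : p = pr.reverse.concat hua.symm := by
    have := congrArg SimpleGraph.Walk.reverse hpr
    rw [SimpleGraph.Walk.reverse_reverse] at this
    rw [this, SimpleGraph.Walk.reverse_cons, SimpleGraph.Walk.concat_eq_append]
  -- support of W
  have hsupp : W.support = pr.reverse.support ++ (u :: q'.support) := by
    rw [hW, SimpleGraph.Walk.support_append, hpeq, SimpleGraph.Walk.support_concat,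
      hq', SimpleGraph.Walk.support_cons]
    simp [List.concat_eq_append]
  -- a and b are in W's support and differ from u
  have hnodup : W.support.Nodup := hpath.support_nodup
  have haW : a ∈ W.support := by
    rw [hsupp]
    have : a ∈ pr.reverse.support := SimpleGraph.Walk.end_mem_support _
    simp [this]
  have hbW : b ∈ W.support := by
    rw [hsupp]
    have : b ∈ q'.support := SimpleGraph.Walk.start_mem_support _
    simp [this]
  have hau : a ≠ u := by
    intro h
    rw [hsupp] at hnodup
    have h1 := (List.nodup_append'.mp hnodup).2.2
    exact h1 (SimpleGraph.Walk.end_mem_support pr.reverse) (by simp [h])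
  have hbu : b ≠ u := by
    intro h
    rw [hsupp] at hnodup
    have h2 := (List.nodup_append.mp hnodup).2.1
    rw [List.nodup_cons] at h2
    refine h2.1 ?_
    rw [← h]
    exact SimpleGraph.Walk.start_mem_support q'
  have haM : a ∉ M := fun h => hau (huniq a haW h)
  have hbM : b ∉ M := fun h => hbu (huniq b hbW h)
  have hav : G.Adj a v := ((hM u huM v hvM a haM).mp hua.symm.symm).symm
  have hvb : G.Adj v b := (hM u huM v hvM b hbM).mp hub
  -- the new walk
  have hSmap : ((pr.reverse.concat hav).append (SimpleGraph.Walk.cons hvb q')).support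
      = W.support.map (fun x => if x = u then v else x) := by
    rw [SimpleGraph.Walk.support_append, SimpleGraph.Walk.support_concat,
      SimpleGraph.Walk.support_cons, hsupp]
    simp only [List.map_append, List.map_cons, List.concat_eq_append, if_pos rfl]
    have h1 : pr.reverse.support.map (fun x => if x = u then v else x)
        = pr.reverse.support := by
      apply List.map_congr_left ?_ |>.trans (List.map_id _)
      intro x hx
      have : x ≠ u := by
        rw [hsupp] at hnodup
        intro h
        exact (List.nodup_append'.mp hnodup).2.2 (h ▸ hx) (by simp)
      simp [this]
    have h2 : q'.support.map (fun x => if x = u then v else x) = q'.support := by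
      apply List.map_congr_left ?_ |>.trans (List.map_id _)
      intro x hx
      have : x ≠ u := by
        rw [hsupp] at hnodup
        have := (List.nodup_append'.mp hnodup).2.1
        rw [List.nodup_cons] at this
        intro h
        exact this.1 (h ▸ hx)
      simp [this]
    rw [h1, h2]
    simp
  refine ⟨(pr.reverse.concat hav).append (SimpleGraph.Walk.cons hvb q'), ?_, ?_, hSmap⟩
  · -- IsPath
    rw [SimpleGraph.Walk.isPath_def, hSmap]
    have hinj : ∀ x ∈ W.support, ∀ y ∈ W.support,
        (if x = u then v else x) = (if y = u then v else y) → x = y := by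
      intro x hx y hy h
      by_cases hxu : x = u
      · by_cases hyu : y = u
        · rw [hxu, hyu]
        · rw [if_pos hxu, if_neg hyu] at h
          exact absurd (show v ∈ W.support by rw [h]; exact hy) hvW
      · by_cases hyu : y = u
        · rw [if_neg hxu, if_pos hyu] at h
          rw [h] at hx
          exact absurd hx hvW
        · rwa [if_neg hxu, if_neg hyu] at h
    exact hnodup.map_on hinj
  · -- length
    have hl : ((pr.reverse.concat hav).append (SimpleGraph.Walk.cons hvb q')).length
        = W.length := by
      rw [hW, hpeq, hq']
      simp [SimpleGraph.Walk.length_append, SimpleGraph.Walk.length_concat]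
    rw [hl, hlen]
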